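/- Let W ⊂ U and Z ⊂ V be finite-dimensional subspaces and δ ∈ (0,1). If Z is δ-proximal for W, then the discrete saddle point problem (r_{W,Z}, v)_V + b(u_{W,Z}, v) = ⟨f, v⟩ for all v ∈ Z, b(w, r_{W,Z}) = 0 for all w ∈ W, has a unique solution (u_{W,Z}, r_{W,Z}) ∈ W × Z, and it satisfies ‖u − u_{W,Z}‖_{Û} ≤ (1−δ)^{−1} inf_{w∈W} ‖u − w‖_{Û} and ‖u − u_{W,Z}‖_{Û} + ‖r_{W,Z}‖_V ≤ 2(1−δ)^{−1} inf_{w∈W} ‖u − w‖_{Û}. -/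

import Mathlib

set_option maxHeartbeats 1000000

open Metric InnerProductSpace RealInnerProductSpace

private lemma sq_trick {a b : ℝ} (ha : 0 ≤ a) (hb : 0 ≤ b) (h : a ^ 2 ≤ a * b) : a ≤ b := by
  by_contra h'
  push_neg at h'
  nlinarith

/-- Theorem `thm:saddle` (ii): if `Z` is `δ`-proximal for `W`, i.e.
`‖(I − P_{V,Z}) R_V B w‖_V ≤ δ ‖R_V B w‖_V` for all `w ∈ W`, then the discrete saddle
point problem has a unique solution `(u_{W,Z}, r_{W,Z}) ∈ W × Z` and, with
`‖w‖_Û := ‖Bw‖_{V'}`,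
`‖u − u_{W,Z}‖_Û ≤ (1−δ)⁻¹ inf_{w∈W} ‖u − w‖_Û` and
`‖u − u_{W,Z}‖_Û + ‖r_{W,Z}‖_V ≤ 2(1−δ)⁻¹ inf_{w∈W} ‖u − w‖_Û`. -/
theorem delta_proximal_saddle_quasi_optimality
    {U V : Type*} [NormedAddCommGroup U] [InnerProductSpace ℝ U] [CompleteSpace U]
    [NormedAddCommGroup V] [InnerProductSpace ℝ V] [CompleteSpace V]
    (B : U ≃L[ℝ] (V →L[ℝ] ℝ)) (f : V →L[ℝ] ℝ) (u : U) (hu : B u = f)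
    (W : Submodule ℝ U) [FiniteDimensional ℝ W]
    (Z : Submodule ℝ V) [FiniteDimensional ℝ Z]
    (δ : ℝ) (hδ0 : 0 < δ) (hδ1 : δ < 1)
    (hprox : ∀ w ∈ W,
      ‖(toDual ℝ V).symm (B w) - (Z.orthogonalProjectionOnto ((toDual ℝ V).symm (B w)) : V)‖ ≤
        δ * ‖(toDual ℝ V).symm (B w)‖) :
    ∃ uWZ rWZ, uWZ ∈ W ∧ rWZ ∈ Z ∧
      ((∀ v ∈ Z, ⟪rWZ, v⟫_ℝ + (B uWZ) v = f v) ∧ ∀ w ∈ W, (B w) rWZ = 0) ∧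
      (∀ u' r', u' ∈ W → r' ∈ Z →
        ((∀ v ∈ Z, ⟪r', v⟫_ℝ + (B u') v = f v) ∧ ∀ w ∈ W, (B w) r' = 0) →
          u' = uWZ ∧ r' = rWZ) ∧
      ‖B (u - uWZ)‖ ≤ (1 - δ)⁻¹ * (⨅ w : W, ‖B (u - (w : U))‖) ∧
      ‖B (u - uWZ)‖ + ‖rWZ‖ ≤ 2 * (1 - δ)⁻¹ * (⨅ w : W, ‖B (u - (w : U))‖) := by
  classical
  set T : U → V := fun w => (toDual ℝ V).symm (B w) with hT
  set P : V → V := fun x => (Z.orthogonalProjectionOnto x : V) with hPdef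
  have hTin : ∀ (w : U) (v : V), ⟪T w, v⟫_ℝ = B w v := by
    intro w v; simp [hT, toDual_symm_apply]
  have hTnorm : ∀ w : U, ‖T w‖ = ‖B w‖ := by
    intro w; simp [hT]
  have hTsub : ∀ x y : U, T (x - y) = T x - T y := by
    intro x y; simp [hT, map_sub]
  have hTadd : ∀ x y : U, T (x + y) = T x + T y := by
    intro x y; simp [hT, map_add]
  have hTsmul : ∀ (c : ℝ) (x : U), T (c • x) = c • T x := by
    intro c x; simp [hT, map_smul]
  have hPmem : ∀ x : V, P x ∈ Z := fun x => (Z.orthogonalProjectionOnto x).2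
  have hPsub : ∀ x y : V, P (x - y) = P x - P y := by
    intro x y; simp [hPdef, map_sub]
  have hPadd : ∀ x y : V, P (x + y) = P x + P y := by
    intro x y; simp [hPdef, map_add]
  have hPid : ∀ x : V, ∀ v ∈ Z, ⟪P x, v⟫_ℝ = ⟪x, v⟫_ℝ := by
    intro x v hv
    have h0 : ⟪v, x - P x⟫_ℝ = 0 :=
      (Submodule.mem_orthogonal Z _).1 (Z.sub_starProjection_mem_orthogonal x) v hv
    have h1 : ⟪x - P x, v⟫_ℝ = 0 := by rw [real_inner_comm]; exact h0
    rw [inner_sub_left] at h1; linarith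
  have hPsa : ∀ x y : V, ⟪P x, y⟫_ℝ = ⟪x, P y⟫_ℝ := fun x y =>
    Z.inner_starProjection_left_eq_right x y
  have hPsq : ∀ x : V, ⟪P x, x⟫_ℝ = ‖P x‖ ^ 2 := by
    intro x
    have := hPid x (P x) (hPmem x)   -- ⟪P x, P x⟫ = ⟪x, P x⟫
    rw [real_inner_comm]
    rw [← this, real_inner_self_eq_norm_sq]
  -- proximality restated
  have hprox' : ∀ w ∈ W, ‖T w - P (T w)‖ ≤ δ * ‖T w‖ := hprox
  -- coercivity
  have hco : ∀ w ∈ W, (1 - δ) * ‖T w‖ ≤ ‖P (T w)‖ := by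
    intro w hw
    have tri : ‖T w‖ ≤ ‖P (T w)‖ + ‖T w - P (T w)‖ := by
      calc ‖T w‖ = ‖P (T w) + (T w - P (T w))‖ := by congr 1; abel
        _ ≤ _ := norm_add_le _ _
    have := hprox' w hw
    nlinarith
  have hzero : ∀ w ∈ W, ‖P (T w)‖ = 0 → w = 0 := by
    intro w hw h0
    have h1 := hco w hw
    rw [h0] at h1
    have h2 : ‖T w‖ = 0 := le_antisymm (by nlinarith [norm_nonneg (T w)]) (norm_nonneg _)
    have h3 : ‖B w‖ = 0 := by rw [← hTnorm]; exact h2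
    have h4 : B w = 0 := norm_eq_zero.1 h3
    have := B.symm_apply_apply w
    rw [h4] at this
    simpa using this.symm
  -- existence of the Galerkin component
  have hexists : ∃ uW : W, ∀ w : W, ⟪P (T (uW : U)), T (w : U)⟫_ℝ = ⟪P (T u), T (w : U)⟫_ℝ := by
    let a : W →ₗ[ℝ] Module.Dual ℝ W := LinearMap.mk₂ ℝ
      (fun w' w => ⟪P (T (w' : U)), T (w : U)⟫_ℝ)
      (by intro m₁ m₂ n
          simp [Submodule.coe_add, hTadd, hPdef, map_add, inner_add_left])
      (by intro c m n
          simp [Submodule.coe_smul, hTsmul, hPdef, map_smul, real_inner_smul_left])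
      (by intro m n₁ n₂
          simp [Submodule.coe_add, hTadd, inner_add_right])
      (by intro c m n
          simp [Submodule.coe_smul, hTsmul, real_inner_smul_right])
    have hinj : Function.Injective a := by
      rw [injective_iff_map_eq_zero]
      intro w' h0
      have h1 : ⟪P (T (w' : U)), T (w' : U)⟫_ℝ = 0 := by
        have := LinearMap.congr_fun h0 w'
        simpa [a, LinearMap.mk₂_apply] using this
      rw [hPsq] at h1
      have h2 : ‖P (T (w' : U))‖ = 0 := by nlinarith [norm_nonneg (P (T (w' : U)))]
      have h3 : (w' : U) = 0 := hzero _ w'.2 h2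
      exact Subtype.ext h3
    have hsurj : Function.Surjective a :=
      (LinearMap.injective_iff_surjective_of_finrank_eq_finrank
        (Subspace.dual_finrank_eq (V := W)).symm).1 hinj
    let ψ : Module.Dual ℝ W :=
      { toFun := fun w => ⟪P (T u), T (w : U)⟫_ℝ
        map_add' := by intro x y; simp [Submodule.coe_add, hTadd, inner_add_right]
        map_smul' := by intro c x; simp [Submodule.coe_smul, hTsmul, real_inner_smul_right] }
    obtain ⟨uW, huW⟩ := hsurj ψ
    refine ⟨uW, fun w => ?_⟩
    have := LinearMap.congr_fun huW w
    simpa [a, ψ, LinearMap.mk₂_apply] using this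
  obtain ⟨uW, huW⟩ := hexists
  -- orthogonality of the residual
  have horth : ∀ w : W, ⟪P (T (u - (uW : U))), T (w : U)⟫_ℝ = 0 := by
    intro w
    rw [hTsub, hPsub, inner_sub_left, huW w, sub_self]
  set r : V := P (T (u - (uW : U))) with hrdef
  -- the saddle point equations
  have heq1 : ∀ v ∈ Z, ⟪r, v⟫_ℝ + (B (uW : U)) v = f v := by
    intro v hv
    rw [hrdef, hPid _ v hv, hTin]
    rw [map_sub, ContinuousLinearMap.sub_apply, hu]
    ring
  have heq2 : ∀ w ∈ W, (B w) r = 0 := by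
    intro w hw
    rw [← hTin, real_inner_comm]
    exact horth ⟨w, hw⟩
  -- uniqueness
  have huniq : ∀ u' r', u' ∈ W → r' ∈ Z →
      ((∀ v ∈ Z, ⟪r', v⟫_ℝ + (B u') v = f v) ∧ ∀ w ∈ W, (B w) r' = 0) →
        u' = (uW : U) ∧ r' = r := by
    intro u' r' hu'W hr'Z ⟨h1, h2⟩
    -- step A : r' = P (T (u - u'))
    have hstepA : r' = P (T (u - u')) := by
      have hsZ : r' - P (T (u - u')) ∈ Z := Z.sub_mem hr'Z (hPmem _)
      have hso : ∀ v ∈ Z, ⟪r' - P (T (u - u')), v⟫_ℝ = 0 := by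
        intro v hv
        rw [inner_sub_left, hPid _ v hv, hTin, map_sub, ContinuousLinearMap.sub_apply, hu]
        have := h1 v hv
        linarith
      have h0 : ⟪r' - P (T (u - u')), r' - P (T (u - u'))⟫_ℝ = 0 := hso _ hsZ
      rw [inner_self_eq_zero] at h0
      exact sub_eq_zero.1 h0
    -- step B : the perturbed orthogonality for u'
    have hstepB : ∀ w ∈ W, ⟪P (T (u - u')), T w⟫_ℝ = 0 := by
      intro w hw
      have hb := h2 w hw
      rw [← hTin, real_inner_comm, hstepA] at hb
      exact hb
    -- step C : u' = uW
    have hC : u' = (uW : U) := by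
      have hmem : (uW : U) - u' ∈ W := W.sub_mem uW.2 hu'W
      have hkey : ⟪P (T ((uW : U) - u')), T ((uW : U) - u')⟫_ℝ = 0 := by
        have hrw : T ((uW : U) - u') = T (u - u') - T (u - (uW : U)) := by
          rw [hTsub, hTsub, hTsub]; abel
        rw [hrw, hPsub, inner_sub_left, inner_sub_right, inner_sub_right]
        have b1 := hstepB _ hmem
        have o1 := horth ⟨(uW : U) - u', hmem⟩
        simp only [hrw] at b1 o1 ⊢
        rw [inner_sub_right] at b1 o1
        linarith
      rw [hPsq] at hkey
      have h2' : ‖P (T ((uW : U) - u'))‖ = 0 := by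
        nlinarith [norm_nonneg (P (T ((uW : U) - u')))]
      have h3 := hzero _ hmem h2'
      exact (sub_eq_zero.1 h3).symm
    refine ⟨hC, ?_⟩
    rw [hstepA, hC]
  -- pointwise error bounds
  have hb2 : ∀ w : W, ‖r‖ ≤ ‖T (u - (w : U))‖ := by
    intro w
    have hmem : (w : U) - (uW : U) ∈ W := W.sub_mem w.2 uW.2
    have hsplit : T (u - (uW : U)) = T (u - (w : U)) + T ((w : U) - (uW : U)) := by
      rw [hTsub, hTsub, hTsub]; abel
    have h1 : ‖r‖ ^ 2 = ⟪r, T (u - (uW : U))⟫_ℝ := by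
      rw [hrdef]; exact (hPsq _).symm
    have h2 : ⟪r, T ((w : U) - (uW : U))⟫_ℝ = 0 := horth ⟨_, hmem⟩
    have h3 : ‖r‖ ^ 2 ≤ ‖r‖ * ‖T (u - (w : U))‖ := by
      rw [h1, hsplit, inner_add_right, h2, add_zero]
      exact real_inner_le_norm _ _
    exact sq_trick (norm_nonneg _) (norm_nonneg _) h3
  have hz_le : ∀ w : W, (1 - δ) * ‖T ((w : U) - (uW : U))‖ ≤ ‖T (u - (w : U))‖ := by
    intro w
    have hmem : (w : U) - (uW : U) ∈ W := W.sub_mem w.2 uW.2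
    have hsplit : T ((w : U) - (uW : U)) = T (u - (uW : U)) - T (u - (w : U)) := by
      rw [hTsub, hTsub, hTsub]; abel
    have hP1 : ‖P (T ((w : U) - (uW : U)))‖ ^ 2
        = ⟪P (T ((w : U) - (uW : U))), T ((w : U) - (uW : U))⟫_ℝ := (hPsq _).symm
    have h2 : ⟪r, T ((w : U) - (uW : U))⟫_ℝ = 0 := horth ⟨_, hmem⟩
    have h3 : ‖P (T ((w : U) - (uW : U)))‖ ^ 2
        = - ⟪T (u - (w : U)), P (T ((w : U) - (uW : U)))⟫_ℝ := by
      rw [hP1]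
      nth_rewrite 1 [hsplit]
      rw [hPsub, inner_sub_left, ← hrdef, h2, hPsa]
      ring
    have h4 : ‖P (T ((w : U) - (uW : U)))‖ ^ 2
        ≤ ‖T (u - (w : U))‖ * ‖P (T ((w : U) - (uW : U)))‖ := by
      rw [h3]
      have := abs_real_inner_le_norm (T (u - (w : U))) (P (T ((w : U) - (uW : U))))
      have habs := neg_abs_le (⟪T (u - (w : U)), P (T ((w : U) - (uW : U)))⟫_ℝ)
      linarith
    have h5 : ‖P (T ((w : U) - (uW : U)))‖ ≤ ‖T (u - (w : U))‖ := by
      have h4' : ‖P (T ((w : U) - (uW : U)))‖ ^ 2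
          ≤ ‖P (T ((w : U) - (uW : U)))‖ * ‖T (u - (w : U))‖ := by
        rw [mul_comm] at h4; exact h4
      exact sq_trick (norm_nonneg _) (norm_nonneg _) h4'
    exact le_trans (hco _ hmem) h5
  have he_le : ∀ w : W, ‖T (u - (uW : U))‖
      ≤ ‖T (u - (w : U))‖ + δ * ‖T ((w : U) - (uW : U))‖ := by
    intro w
    have hmem : (w : U) - (uW : U) ∈ W := W.sub_mem w.2 uW.2
    have hsplit : T (u - (uW : U)) = T (u - (w : U)) + T ((w : U) - (uW : U)) := by
      rw [hTsub, hTsub, hTsub]; abel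
    have h0 : ⟪T (u - (uW : U)), P (T ((w : U) - (uW : U)))⟫_ℝ = 0 := by
      rw [← hPsa, ← hrdef]
      exact horth ⟨_, hmem⟩
    have h1 : ‖T (u - (uW : U))‖ ^ 2
        = ⟪T (u - (uW : U)), T (u - (w : U))⟫_ℝ
          + ⟪T (u - (uW : U)), T ((w : U) - (uW : U)) - P (T ((w : U) - (uW : U)))⟫_ℝ := by
      rw [inner_sub_right, h0, sub_zero, ← inner_add_right, ← hsplit,
        real_inner_self_eq_norm_sq]
    have h2 : ⟪T (u - (uW : U)), T (u - (w : U))⟫_ℝ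
        ≤ ‖T (u - (uW : U))‖ * ‖T (u - (w : U))‖ := real_inner_le_norm _ _
    have h3 : ⟪T (u - (uW : U)), T ((w : U) - (uW : U)) - P (T ((w : U) - (uW : U)))⟫_ℝ
        ≤ ‖T (u - (uW : U))‖ * (δ * ‖T ((w : U) - (uW : U))‖) := by
      calc _ ≤ ‖T (u - (uW : U))‖ * ‖T ((w : U) - (uW : U)) - P (T ((w : U) - (uW : U)))‖ :=
            real_inner_le_norm _ _
        _ ≤ _ := mul_le_mul_of_nonneg_left (hprox' _ hmem) (norm_nonneg _)
    have h4 : ‖T (u - (uW : U))‖ ^ 2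
        ≤ ‖T (u - (uW : U))‖ * (‖T (u - (w : U))‖ + δ * ‖T ((w : U) - (uW : U))‖) := by
      rw [h1]; rw [mul_add]; linarith
    exact sq_trick (norm_nonneg _) (by positivity) h4
  have hb1 : ∀ w : W, (1 - δ) * ‖T (u - (uW : U))‖ ≤ ‖T (u - (w : U))‖ := by
    intro w
    have h1 := he_le w
    have h2 := hz_le w
    nlinarith [norm_nonneg (T (u - (w : U))), norm_nonneg (T ((w : U) - (uW : U)))]
  -- pass to the infimum
  have hnonempty : Nonempty W := ⟨0⟩
  have hIlb1 : (1 - δ) * ‖B (u - (uW : U))‖ ≤ ⨅ w : W, ‖B (u - (w : U))‖ :=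
    le_ciInf fun w => by rw [← hTnorm, ← hTnorm]; exact hb1 w
  have hIlb2 : ‖r‖ ≤ ⨅ w : W, ‖B (u - (w : U))‖ :=
    le_ciInf fun w => by rw [← hTnorm]; exact hb2 w
  have hInn : (0 : ℝ) ≤ ⨅ w : W, ‖B (u - (w : U))‖ :=
    le_ciInf fun w => norm_nonneg _
  have hpos : (0 : ℝ) < 1 - δ := by linarith
  have hinv : (1 : ℝ) ≤ (1 - δ)⁻¹ := by
    rw [one_le_inv_iff₀]
    exact ⟨hpos, by linarith⟩
  have hgoal1 : ‖B (u - (uW : U))‖ ≤ (1 - δ)⁻¹ * ⨅ w : W, ‖B (u - (w : U))‖ := by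
    have h := mul_le_mul_of_nonneg_left hIlb1 (inv_pos.2 hpos).le
    rwa [← mul_assoc, inv_mul_cancel₀ hpos.ne', one_mul] at h
  have hgoal2 : ‖B (u - (uW : U))‖ + ‖r‖
      ≤ 2 * (1 - δ)⁻¹ * ⨅ w : W, ‖B (u - (w : U))‖ := by
    nlinarith [mul_le_mul_of_nonneg_left hIlb2 (le_trans zero_le_one hinv)]
  exact ⟨(uW : U), r, uW.2, by rw [hrdef]; exact hPmem _, ⟨heq1, heq2⟩, huniq, hgoal1, hgoal2⟩
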